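/- Contracting the unique edge at a root with a single child preserves the plucking polynomial: if the root r of a rooted tree T has exactly one child, and T' is the tree obtained by contracting the edge from r to its child, then Q(T) = Q(T'). -/

import Mathlib

open Finset

/-- The q-number `[n]_q = 1 + q + ⋯ + q^{n-1}` as a rational function over ℚ. -/
noncomputable def qnum (n : ℕ) : RatFunc ℚ := ∑ i ∈ Finset.range n, RatFunc.X ^ i

/-- The q-factorial `[n]_q! = ∏_{i=1}^n [i]_q`. -/
noncomputable def qfact (n : ℕ) : RatFunc ℚ := ∏ i ∈ Finset.range n, qnum (i + 1)

/-- The q-binomial coefficient `[m+n]_q! / ([m]_q! [n]_q!)`. -/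
noncomputable def qbinom (m n : ℕ) : RatFunc ℚ := qfact (m + n) / (qfact m * qfact n)

/-- The q-multinomial coefficient of a list of nonnegative integers. -/
noncomputable def qmultinomial (l : List ℕ) : RatFunc ℚ :=
  qfact l.sum / (l.map qfact).prod

/-- Plane rooted trees: a root together with an ordered list of subtrees. -/
inductive PTree where
  | node : List PTree → PTree

namespace PTree

/-- Number of edges of a rooted tree. -/
def edges : PTree → ℕ
  | node ts => (ts.attach.map fun t => edges t.1 + 1).sum
decreasing_by simp only [PTree.node.sizeOf_spec, Nat.add_comm 1]; exact Nat.lt_succ_of_lt (List.sizeOf_lt_of_mem t.2)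

/-- Multiset of descendant counts `d(v)` over the non-root vertices of `T`. -/
def ND : PTree → Multiset ℕ
  | node ts => (ts.attach.map fun t => edges t.1 ::ₘ ND t.1).sum
decreasing_by simp only [PTree.node.sizeOf_spec, Nat.add_comm 1]; exact Nat.lt_succ_of_lt (List.sizeOf_lt_of_mem t.2)

/-- Multiset `D(T) = {d(v) : v ∈ V(T)}` of descendant counts over all vertices. -/
def D (t : PTree) : Multiset ℕ := edges t ::ₘ ND t

/-- The plucking polynomial `Q(T) = [d(r)]_q! / ∏_{v ≠ r} [d(v)+1]_q`. -/
noncomputable def Q (t : PTree) : RatFunc ℚ :=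
  qfact (edges t) / ((ND t).map fun x => qnum (x + 1)).prod

end PTree

lemma qnum_ne_zero (n : ℕ) : qnum (n + 1) ≠ 0 := by
  unfold qnum
  have : (∑ i ∈ Finset.range (n + 1), (RatFunc.X : RatFunc ℚ) ^ i) =
      algebraMap (Polynomial ℚ) (RatFunc ℚ) (∑ i ∈ Finset.range (n + 1), (Polynomial.X : Polynomial ℚ) ^ i) := by
    simp [map_sum, map_pow, RatFunc.algebraMap_X]
  rw [this]
  simp only [ne_eq, FaithfulSMul.algebraMap_eq_zero_iff]
  intro h
  have := congrArg (Polynomial.coeff · 0) h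
  simp [Polynomial.coeff_X_pow, Finset.sum_ite_eq'] at this

open PTree in
/-- Destabilization: if the root of `T` has exactly one child, contracting the root edge
preserves the plucking polynomial. -/
theorem Q_destabilization (t : PTree) : Q (node [t]) = Q t := by
  have he : edges (node [t]) = edges t + 1 := by
    rw [edges]; simp
  have hnd : ND (node [t]) = edges t ::ₘ ND t := by
    rw [ND]; simp
  rw [Q, Q, he, hnd]
  rw [Multiset.map_cons, Multiset.prod_cons]
  have hf : qfact (edges t + 1) = qfact (edges t) * qnum (edges t + 1) := by
    rw [qfact, qfact, Finset.prod_range_succ]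
  rw [hf, mul_comm (qfact (edges t)), mul_div_mul_left _ _ (qnum_ne_zero (edges t))]
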